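/- For n ≥ 3, the number of partial permutations of length n with 2 holes avoiding the pattern 2413 is 3n−6; the same holds for the pattern 3142. For the specific hole set H = {i,j} with 1 ≤ i < j ≤ n, s_n^H(2413) = 1 if at least one of the three intervals [1,i−1], [i+1,j−1], [j+1,n] is empty, and s_n^H(2413) = 0 otherwise. -/

import Mathlib

open Finset

/-- The word `σ` contains the pattern `p`: there is a subsequence of `σ`
order-isomorphic to `p`. -/
def ContainsPat {n ℓ : ℕ} {α β : Type*} [LinearOrder α] [LinearOrder β]
    (σ : Fin n → α) (p : Fin ℓ → β) : Prop :=
  ∃ g : Fin ℓ → Fin n, StrictMono g ∧ ∀ a b : Fin ℓ, σ (g a) < σ (g b) ↔ p a < p b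

/-- `σ ∈ S_n` is an extension of the partial permutation `π`: on the non-hole
positions, the relative order of the values of `σ` matches that of `π`. -/
def IsExtension {n : ℕ} {α : Type*} [LinearOrder α]
    (σ : Equiv.Perm (Fin n)) (π : Fin n → Option α) : Prop :=
  ∀ i j : Fin n, ∀ vi vj : α, π i = some vi → π j = some vj → (σ i < σ j ↔ vi < vj)

/-- The partial permutation `π` avoids the pattern `p`: every extension avoids `p`. -/
def PPAvoids {n ℓ : ℕ} {α β : Type*} [LinearOrder α] [LinearOrder β]
    (π : Fin n → Option α) (p : Fin ℓ → β) : Prop :=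
  ∀ σ : Equiv.Perm (Fin n), IsExtension σ π → ¬ ContainsPat (⇑σ) p

/-- `π` is a partial permutation of length `n` with `k` holes: each value of
`{1,…,n-k}` appears exactly once and there are exactly `k` holes. -/
def IsPPerm {n : ℕ} (k : ℕ) (π : Fin n → Option (Fin (n - k))) : Prop :=
  (Finset.univ.filter fun i => π i = none).card = k ∧
    ∀ v : Fin (n - k), ∃! i : Fin n, π i = some v

/-- `π` is a partial permutation whose holes are exactly at the positions in `H`. -/
def IsPPermH {n : ℕ} (H : Finset (Fin n)) (π : Fin n → Option (Fin (n - H.card))) : Prop :=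
  (∀ i, π i = none ↔ i ∈ H) ∧ ∀ v : Fin (n - H.card), ∃! i : Fin n, π i = some v

/-- `s_n^k(p)`: the number of `p`-avoiding partial permutations of length `n`
with `k` holes. -/
noncomputable def snk (n k : ℕ) {ℓ : ℕ} (p : Fin ℓ → Fin ℓ) : ℕ :=
  Nat.card {π : Fin n → Option (Fin (n - k)) // IsPPerm k π ∧ PPAvoids π p}

/-- `s_n^H(p)`: the number of `p`-avoiding partial permutations of length `n`
with hole set `H`. -/
noncomputable def snH {n ℓ : ℕ} (H : Finset (Fin n)) (p : Fin ℓ → Fin ℓ) : ℕ :=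
  Nat.card {π : Fin n → Option (Fin (n - H.card)) // IsPPermH H π ∧ PPAvoids π p}

/-- The number of permutations of length `m` avoiding the pattern `p`. -/
noncomputable def avoidCount (m : ℕ) {ℓ : ℕ} (p : Fin ℓ → Fin ℓ) : ℕ :=
  Nat.card {σ : Equiv.Perm (Fin m) // ¬ ContainsPat (⇑σ) p}

/-- `p` is a Baxter permutation: no indices `a < b < c = b+1 < d` such that
`(p a, p b, p c, p d)` is order-isomorphic to `2413` or `3142`. -/
def IsBaxter {ℓ : ℕ} (p : Fin ℓ → Fin ℓ) : Prop :=
  ¬ ∃ a b c d : Fin ℓ, a < b ∧ (b : ℕ) + 1 = (c : ℕ) ∧ c < d ∧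
    ((p c < p a ∧ p a < p d ∧ p d < p b) ∨ (p b < p d ∧ p d < p a ∧ p a < p c))

/-! ## Insertion gadget -/

def insF (x y t : ℕ) : ℕ := if t < x then t else if t + 1 < y then t + 1 else t + 2

lemma insF_lt_insF {x y : ℕ} {t s : ℕ} : insF x y t < insF x y s ↔ t < s := by
  unfold insF; split_ifs <;> omega

lemma insF_ne_x {x y : ℕ} (hxy : x < y) (t : ℕ) : insF x y t ≠ x := by
  unfold insF; split_ifs <;> omega

lemma insF_ne_y {x y : ℕ} (hxy : x < y) (t : ℕ) : insF x y t ≠ y := by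
  unfold insF; split_ifs <;> omega

lemma insF_lt {m n x y t : ℕ} (hm : m + 2 = n) (ht : t < m) : insF x y t < n := by
  unfold insF; split_ifs <;> omega

lemma insF_surj {m n x y k : ℕ} (hm : m + 2 = n) (hxy : x < y) (hy : y < n) (hk : k < n)
    (hkx : k ≠ x) (hky : k ≠ y) : ∃ t < m, insF x y t = k :=
  ⟨if k < x then k else if k < y then k - 1 else k - 2,
    by split_ifs <;> omega, by unfold insF; split_ifs <;> omega⟩

/-! ## Pattern 2413 helpers -/

private lemma sm4 {n : ℕ} {q0 q1 q2 q3 : Fin n}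
    (h01 : q0 < q1) (h12 : q1 < q2) (h23 : q2 < q3) :
    StrictMono (![q0, q1, q2, q3] : Fin 4 → Fin n) := by
  have p01 := Fin.lt_def.mp h01
  have p12 := Fin.lt_def.mp h12
  have p23 := Fin.lt_def.mp h23
  have key : ∀ a b : Fin 4, a < b → (![q0, q1, q2, q3] : Fin 4 → Fin n) a < ![q0, q1, q2, q3] b := by
    intro a b hab
    have hab' := Fin.lt_def.mp hab
    have ha : a = 0 ∨ a = 1 ∨ a = 2 ∨ a = 3 := by omega
    have hb : b = 0 ∨ b = 1 ∨ b = 2 ∨ b = 3 := by omega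
    rcases ha with rfl|rfl|rfl|rfl <;> rcases hb with rfl|rfl|rfl|rfl <;>
      simp only [Matrix.cons_val_zero, Matrix.cons_val_one, Matrix.head_cons,
        Matrix.cons_val_two, Matrix.tail_cons, Matrix.cons_val_three] <;>
      first
        | exact Fin.lt_def.mpr (by omega)
        | omega
  exact fun a b hab => key a b hab

private lemma iff4 {n : ℕ} {σ : Fin n → Fin n} {q0 q1 q2 q3 : Fin n}
    (hv1 : σ q2 < σ q0) (hv2 : σ q0 < σ q3) (hv3 : σ q3 < σ q1) :
    ∀ a b : Fin 4, σ (![q0, q1, q2, q3] a) < σ (![q0, q1, q2, q3] b) ↔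
      (![1,3,0,2] : Fin 4 → Fin 4) a < ![1,3,0,2] b := by
  have h1 := Fin.lt_def.mp hv1
  have h2 := Fin.lt_def.mp hv2
  have h3 := Fin.lt_def.mp hv3
  intro a b
  have ha : a = 0 ∨ a = 1 ∨ a = 2 ∨ a = 3 := by omega
  have hb : b = 0 ∨ b = 1 ∨ b = 2 ∨ b = 3 := by omega
  rcases ha with rfl|rfl|rfl|rfl <;> rcases hb with rfl|rfl|rfl|rfl <;>
    simp only [Matrix.cons_val_zero, Matrix.cons_val_one, Matrix.head_cons,
      Matrix.cons_val_two, Matrix.tail_cons, Matrix.cons_val_three] <;>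
    first
      | exact iff_of_true (Fin.lt_def.mpr (by omega)) (by decide)
      | exact iff_of_false (fun h => by rw [Fin.lt_def] at h; omega) (by decide)

lemma contains2413_mk {n : ℕ} {σ : Fin n → Fin n} (q0 q1 q2 q3 : Fin n)
    (h01 : q0 < q1) (h12 : q1 < q2) (h23 : q2 < q3)
    (hv1 : σ q2 < σ q0) (hv2 : σ q0 < σ q3) (hv3 : σ q3 < σ q1) :
    ContainsPat σ (![1, 3, 0, 2] : Fin 4 → Fin 4) :=
  ⟨![q0, q1, q2, q3], sm4 h01 h12 h23, iff4 hv1 hv2 hv3⟩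

lemma contains2413_elim {n : ℕ} {σ : Fin n → Fin n}
    (h : ContainsPat σ (![1, 3, 0, 2] : Fin 4 → Fin 4)) :
    ∃ q0 q1 q2 q3 : Fin n, q0 < q1 ∧ q1 < q2 ∧ q2 < q3 ∧
      σ q2 < σ q0 ∧ σ q0 < σ q3 ∧ σ q3 < σ q1 := by
  obtain ⟨g, hg, hiff⟩ := h
  exact ⟨g 0, g 1, g 2, g 3, hg (by decide), hg (by decide), hg (by decide),
    (hiff 2 0).mpr (by decide), (hiff 0 3).mpr (by decide), (hiff 3 1).mpr (by decide)⟩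

/-! ## Building extensions -/

section Ext
variable {n m : ℕ} {i j : Fin n} {π : Fin n → Option (Fin m)}

lemma val_inj (hsome : ∀ v : Fin m, ∃! k : Fin n, π k = some v)
    {a b : Fin n} {v : Fin m} (ha : π a = some v) (hb : π b = some v) : a = b :=
  ((hsome v).unique ha hb)

/-- Build an extension with prescribed values `u` at hole `i` and `w` at hole `j`. -/
lemma exists_ext (hm : m + 2 = n) (hij : i ≠ j)
    (hnone : ∀ k, π k = none ↔ k = i ∨ k = j)
    (hsome : ∀ v : Fin m, ∃! k : Fin n, π k = some v)
    (u w : Fin n) (huw : u ≠ w) :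
    ∃ σ : Equiv.Perm (Fin n), IsExtension σ π ∧ σ i = u ∧ σ j = w ∧
      ∀ k v, π k = some v → (σ k : ℕ) = insF (min (u : ℕ) w) (max (u : ℕ) w) (v : ℕ) := by
  set x := min (u : ℕ) (w : ℕ) with hx
  set y := max (u : ℕ) (w : ℕ) with hy
  have hxy : x < y := by
    rcases lt_or_gt_of_ne (fun h : (u:ℕ) = (w:ℕ) => huw (Fin.ext h)) with h|h <;> omega
  have hyn : y < n := by have := u.isLt; have := w.isLt; omega
  have hker : ∀ t : Fin m, insF x y (t : ℕ) < n := fun t => insF_lt hm t.isLt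
  set f : Fin n → Fin n := fun k =>
    match hk : π k with
    | none => if k = i then u else w
    | some v => ⟨insF x y (v : ℕ), hker v⟩ with hf
  have hfhole : ∀ k, π k = none → f k = if k = i then u else w := by
    intro k hk; simp only [hf]; split <;> simp_all
  have hfsome : ∀ k v, π k = some v → f k = ⟨insF x y (v : ℕ), hker v⟩ := by
    intro k v hk; simp only [hf]; split <;> simp_all
  have hfi : f i = u := by rw [hfhole i ((hnone i).mpr (Or.inl rfl))]; simp
  have hfj : f j = w := by
    rw [hfhole j ((hnone j).mpr (Or.inr rfl))]; simp [if_neg (Ne.symm hij)]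
  have hinj : Function.Injective f := by
    intro a b hab
    rcases ha : π a with _ | va <;> rcases hb : π b with _ | vb
    · rcases (hnone a).mp ha with rfl|rfl <;> rcases (hnone b).mp hb with rfl|rfl <;>
        first | rfl | (exfalso; rw [hfhole _ ha, hfhole _ hb] at hab; simp_all [if_neg (Ne.symm hij)])
    · exfalso
      rw [hfhole _ ha, hfsome _ _ hb] at hab
      have hvx := insF_ne_x hxy (vb : ℕ)
      have hvy := insF_ne_y hxy (vb : ℕ)
      have := congrArg Fin.val hab
      split_ifs at this <;> simp at this <;> omega
    · exfalso
      rw [hfhole _ hb, hfsome _ _ ha] at hab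
      have hvx := insF_ne_x hxy (va : ℕ)
      have hvy := insF_ne_y hxy (va : ℕ)
      have := congrArg Fin.val hab
      split_ifs at this <;> simp at this <;> omega
    · rw [hfsome _ _ ha, hfsome _ _ hb] at hab
      have := congrArg Fin.val hab
      simp only at this
      have : va = vb := by
        apply Fin.ext
        by_contra hne
        rcases Nat.lt_or_ge (va : ℕ) (vb : ℕ) with h|h
        · have := (insF_lt_insF (x:=x) (y:=y)).mpr h; omega
        · have hlt : (vb:ℕ) < va := by omega
          have := (insF_lt_insF (x:=x) (y:=y)).mpr hlt; omega
      subst this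
      exact val_inj hsome ha hb
  refine ⟨Equiv.ofBijective f (Finite.injective_iff_bijective.mp hinj), ?_, hfi, hfj, ?_⟩
  · intro a b va vb ha hb
    show f a < f b ↔ va < vb
    rw [hfsome _ _ ha, hfsome _ _ hb]
    rw [Fin.lt_def, Fin.lt_def]
    exact insF_lt_insF
  · intro k v hk
    show (f k : ℕ) = _
    rw [hfsome _ _ hk]

end Ext

/-! ## Forced value comparisons for avoiders -/

section Forbidden
variable {n m : ℕ} {i j : Fin n} {π : Fin n → Option (Fin m)}

/-- positions `a < i < e < j` force `va < ve`. -/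
lemma F1 (hm : m + 2 = n) (hij : i < j)
    (hnone : ∀ k, π k = none ↔ k = i ∨ k = j)
    (hsome : ∀ v : Fin m, ∃! k : Fin n, π k = some v)
    (hav : PPAvoids π (![1,3,0,2] : Fin 4 → Fin 4))
    {a e : Fin n} (ha : a < i) (hie : i < e) (hej : e < j)
    {va ve : Fin m} (hva : π a = some va) (hve : π e = some ve) : va < ve := by
  rcases lt_trichotomy va ve with h|h|h
  · exact h
  · exfalso; rw [h] at hva; exact (ne_of_lt (ha.trans hie)) (val_inj hsome hva hve)
  · exfalso
    set u : Fin n := ⟨n - 1, by omega⟩ with hu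
    set w : Fin n := ⟨n - 2, by omega⟩ with hw
    obtain ⟨σ, hext, hσi, hσj, hval⟩ := exists_ext hm (ne_of_lt hij) hnone hsome u w
      (by simp [hu, hw, Fin.ext_iff]; try omega)
    have hva' := hval a va hva
    have hve' := hval e ve hve
    have hxi : (σ i : ℕ) = n - 1 := by rw [hσi]
    have hxj : (σ j : ℕ) = n - 2 := by rw [hσj]
    have hcu : (u : ℕ) = n - 1 := rfl
    have hcw : (w : ℕ) = n - 2 := rfl
    rw [hcu, hcw] at hva' hve'
    have hbva := va.isLt
    have hbve := ve.isLt
    have hlt := Fin.lt_def.mp h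
    refine hav σ hext (contains2413_mk a i e j ha hie hej ?_ ?_ ?_) <;>
      rw [Fin.lt_def] <;> unfold insF at hva' hve' <;> split_ifs at hva' hve' <;> omega

/-- positions `i < e < j < b` force `ve < vb`. -/
lemma F2 (hm : m + 2 = n) (hij : i < j)
    (hnone : ∀ k, π k = none ↔ k = i ∨ k = j)
    (hsome : ∀ v : Fin m, ∃! k : Fin n, π k = some v)
    (hav : PPAvoids π (![1,3,0,2] : Fin 4 → Fin 4))
    {e b : Fin n} (hie : i < e) (hej : e < j) (hjb : j < b)
    {ve vb : Fin m} (hve : π e = some ve) (hvb : π b = some vb) : ve < vb := by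
  rcases lt_trichotomy ve vb with h|h|h
  · exact h
  · exfalso; rw [h] at hve; exact (ne_of_lt (hej.trans hjb)) (val_inj hsome hve hvb)
  · exfalso
    set u : Fin n := ⟨1, by omega⟩ with hu
    set w : Fin n := ⟨0, by omega⟩ with hw
    obtain ⟨σ, hext, hσi, hσj, hval⟩ := exists_ext hm (ne_of_lt hij) hnone hsome u w
      (by simp [hu, hw, Fin.ext_iff]; try omega)
    have h1' := hval e ve hve
    have h2' := hval b vb hvb
    have hxi : (σ i : ℕ) = 1 := by rw [hσi]
    have hxj : (σ j : ℕ) = 0 := by rw [hσj]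
    have hcu : (u : ℕ) = 1 := rfl
    have hcw : (w : ℕ) = 0 := rfl
    rw [hcu, hcw] at h1' h2'
    have hb1 := ve.isLt
    have hb2 := vb.isLt
    have hlt := Fin.lt_def.mp h
    refine hav σ hext (contains2413_mk i e j b hie hej hjb ?_ ?_ ?_) <;>
      rw [Fin.lt_def] <;> unfold insF at h1' h2' <;> split_ifs at h1' h2' <;> omega

/-- positions `a < i , j < b` force `vb < va`. -/
lemma F3 (hm : m + 2 = n) (hij : i < j)
    (hnone : ∀ k, π k = none ↔ k = i ∨ k = j)
    (hsome : ∀ v : Fin m, ∃! k : Fin n, π k = some v)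
    (hav : PPAvoids π (![1,3,0,2] : Fin 4 → Fin 4))
    {a b : Fin n} (ha : a < i) (hjb : j < b)
    {vb va : Fin m} (hvb : π b = some vb) (hva : π a = some va) : vb < va := by
  rcases lt_trichotomy vb va with h|h|h
  · exact h
  · exfalso; rw [h] at hvb; exact (ne_of_gt (ha.trans (hij.trans hjb))) (val_inj hsome hvb hva)
  · exfalso
    set u : Fin n := ⟨n - 1, by omega⟩ with hu
    set w : Fin n := ⟨0, by omega⟩ with hw
    obtain ⟨σ, hext, hσi, hσj, hval⟩ := exists_ext hm (ne_of_lt hij) hnone hsome u w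
      (by simp [hu, hw, Fin.ext_iff]; try omega)
    have h1' := hval b vb hvb
    have h2' := hval a va hva
    have hxi : (σ i : ℕ) = n - 1 := by rw [hσi]
    have hxj : (σ j : ℕ) = 0 := by rw [hσj]
    have hcu : (u : ℕ) = n - 1 := rfl
    have hcw : (w : ℕ) = 0 := rfl
    rw [hcu, hcw] at h1' h2'
    have hb1 := vb.isLt
    have hb2 := va.isLt
    have hlt := Fin.lt_def.mp h
    refine hav σ hext (contains2413_mk a i j b ha hij hjb ?_ ?_ ?_) <;>
      rw [Fin.lt_def] <;> unfold insF at h1' h2' <;> split_ifs at h1' h2' <;> omega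

/-- positions `a < b < i` force `vb < va`. -/
lemma F4 (hm : m + 2 = n) (hij : i < j)
    (hnone : ∀ k, π k = none ↔ k = i ∨ k = j)
    (hsome : ∀ v : Fin m, ∃! k : Fin n, π k = some v)
    (hav : PPAvoids π (![1,3,0,2] : Fin 4 → Fin 4))
    {a b : Fin n} (hab : a < b) (hbi : b < i)
    {vb va : Fin m} (hvb : π b = some vb) (hva : π a = some va) : vb < va := by
  rcases lt_trichotomy vb va with h|h|h
  · exact h
  · exfalso; rw [h] at hvb; exact (ne_of_gt (hab)) (val_inj hsome hvb hva)
  · exfalso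
    set u : Fin n := ⟨0, by omega⟩ with hu
    set w : Fin n := ⟨(va : ℕ) + 2, by omega⟩ with hw
    obtain ⟨σ, hext, hσi, hσj, hval⟩ := exists_ext hm (ne_of_lt hij) hnone hsome u w
      (by simp [hu, hw, Fin.ext_iff]; try omega)
    have h1' := hval b vb hvb
    have h2' := hval a va hva
    have hxi : (σ i : ℕ) = 0 := by rw [hσi]
    have hxj : (σ j : ℕ) = (va : ℕ) + 2 := by rw [hσj]
    have hcu : (u : ℕ) = 0 := rfl
    have hcw : (w : ℕ) = (va : ℕ) + 2 := rfl
    rw [hcu, hcw] at h1' h2'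
    have hb1 := vb.isLt
    have hb2 := va.isLt
    have hlt := Fin.lt_def.mp h
    refine hav σ hext (contains2413_mk a b i j hab hbi hij ?_ ?_ ?_) <;>
      rw [Fin.lt_def] <;> unfold insF at h1' h2' <;> split_ifs at h1' h2' <;> omega

/-- positions `j < a < b` force `vb < va`. -/
lemma F5 (hm : m + 2 = n) (hij : i < j)
    (hnone : ∀ k, π k = none ↔ k = i ∨ k = j)
    (hsome : ∀ v : Fin m, ∃! k : Fin n, π k = some v)
    (hav : PPAvoids π (![1,3,0,2] : Fin 4 → Fin 4))
    {a b : Fin n} (hja : j < a) (hab : a < b)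
    {vb va : Fin m} (hvb : π b = some vb) (hva : π a = some va) : vb < va := by
  rcases lt_trichotomy vb va with h|h|h
  · exact h
  · exfalso; rw [h] at hvb; exact (ne_of_gt (hab)) (val_inj hsome hvb hva)
  · exfalso
    set u : Fin n := ⟨(va : ℕ) + 1, by omega⟩ with hu
    set w : Fin n := ⟨n - 1, by omega⟩ with hw
    obtain ⟨σ, hext, hσi, hσj, hval⟩ := exists_ext hm (ne_of_lt hij) hnone hsome u w
      (by simp [hu, hw, Fin.ext_iff]; try omega)
    have h1' := hval b vb hvb
    have h2' := hval a va hva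
    have hxi : (σ i : ℕ) = (va : ℕ) + 1 := by rw [hσi]
    have hxj : (σ j : ℕ) = n - 1 := by rw [hσj]
    have hcu : (u : ℕ) = (va : ℕ) + 1 := rfl
    have hcw : (w : ℕ) = n - 1 := rfl
    rw [hcu, hcw] at h1' h2'
    have hb1 := vb.isLt
    have hb2 := va.isLt
    have hlt := Fin.lt_def.mp h
    refine hav σ hext (contains2413_mk i j a b hij hja hab ?_ ?_ ?_) <;>
      rw [Fin.lt_def] <;> unfold insF at h1' h2' <;> split_ifs at h1' h2' <;> omega

/-- positions `i < e1 < e2 < j` force `ve1 < ve2`. -/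
lemma F6 (hm : m + 2 = n) (hij : i < j)
    (hnone : ∀ k, π k = none ↔ k = i ∨ k = j)
    (hsome : ∀ v : Fin m, ∃! k : Fin n, π k = some v)
    (hav : PPAvoids π (![1,3,0,2] : Fin 4 → Fin 4))
    {e1 e2 : Fin n} (hie : i < e1) (hee : e1 < e2) (hej : e2 < j)
    {ve1 ve2 : Fin m} (hve1 : π e1 = some ve1) (hve2 : π e2 = some ve2) : ve1 < ve2 := by
  rcases lt_trichotomy ve1 ve2 with h|h|h
  · exact h
  · exfalso; rw [h] at hve1; exact (ne_of_lt (hee)) (val_inj hsome hve1 hve2)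
  · exfalso
    set u : Fin n := ⟨(ve2 : ℕ) + 1, by omega⟩ with hu
    set w : Fin n := ⟨(ve2 : ℕ) + 2, by omega⟩ with hw
    obtain ⟨σ, hext, hσi, hσj, hval⟩ := exists_ext hm (ne_of_lt hij) hnone hsome u w
      (by simp [hu, hw, Fin.ext_iff]; try omega)
    have h1' := hval e1 ve1 hve1
    have h2' := hval e2 ve2 hve2
    have hxi : (σ i : ℕ) = (ve2 : ℕ) + 1 := by rw [hσi]
    have hxj : (σ j : ℕ) = (ve2 : ℕ) + 2 := by rw [hσj]
    have hcu : (u : ℕ) = (ve2 : ℕ) + 1 := rfl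
    have hcw : (w : ℕ) = (ve2 : ℕ) + 2 := rfl
    rw [hcu, hcw] at h1' h2'
    have hb1 := ve1.isLt
    have hb2 := ve2.isLt
    have hlt := Fin.lt_def.mp h
    refine hav σ hext (contains2413_mk i e1 e2 j hie hee hej ?_ ?_ ?_) <;>
      rw [Fin.lt_def] <;> unfold insF at h1' h2' <;> split_ifs at h1' h2' <;> omega

end Forbidden

/-! ## Uniqueness via ranks -/

section Rank
variable {n m : ℕ}

open Classical in
lemma rank_eq {π : Fin n → Option (Fin m)}
    (hsome : ∀ v : Fin m, ∃! k : Fin n, π k = some v)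
    {k : Fin n} {v : Fin m} (hk : π k = some v) :
    (v : ℕ) = ((Finset.univ : Finset (Fin n)).filter
      (fun b => ∃ w : Fin m, π b = some w ∧ w < v)).card := by
  classical
  rw [← Fin.card_Iio (b := v)]
  apply Finset.card_bij (fun w _ => Classical.choose (hsome w).exists)
  · intro w hw
    simp only [Finset.mem_filter, Finset.mem_univ, true_and]
    exact ⟨w, Classical.choose_spec (hsome w).exists, Finset.mem_Iio.mp hw⟩
  · intro w1 h1 w2 h2 heq
    have s1 := Classical.choose_spec (hsome w1).exists
    have s2 := Classical.choose_spec (hsome w2).exists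
    rw [heq] at s1
    rw [s2] at s1
    exact (Option.some_inj.mp s1).symm
  · intro b hb
    simp only [Finset.mem_filter, Finset.mem_univ, true_and] at hb
    obtain ⟨w, hbw, hwv⟩ := hb
    refine ⟨w, Finset.mem_Iio.mpr hwv, ?_⟩
    exact ((hsome w).unique (Classical.choose_spec (hsome w).exists) hbw)

/-- Two partial permutations with the same holes whose value order is pinned by the same
relation `P` are equal. -/
lemma uniq_of_pin {i j : Fin n} {π π' : Fin n → Option (Fin m)} (P : Fin n → Fin n → Prop)
    (hnone : ∀ k, π k = none ↔ k = i ∨ k = j)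
    (hsome : ∀ v : Fin m, ∃! k : Fin n, π k = some v)
    (hnone' : ∀ k, π' k = none ↔ k = i ∨ k = j)
    (hsome' : ∀ v : Fin m, ∃! k : Fin n, π' k = some v)
    (hpin : ∀ a b va vb, π a = some va → π b = some vb → (va < vb ↔ P a b))
    (hpin' : ∀ a b va vb, π' a = some va → π' b = some vb → (va < vb ↔ P a b)) :
    π = π' := by
  classical
  funext k
  rcases hk : π k with _ | v
  · exact ((hnone' k).mpr ((hnone k).mp hk)).symm
  · rcases hk' : π' k with _ | v'
    · exfalso
      have := (hnone k).mpr ((hnone' k).mp hk')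
      rw [hk] at this
      exact Option.some_ne_none _ this
    · congr 1
      apply Fin.ext
      rw [rank_eq hsome hk, rank_eq hsome' hk']
      congr 1
      apply Finset.filter_congr
      intro b _
      constructor
      · rintro ⟨w, hbw, hwv⟩
        have hP : P b k := (hpin b k w v hbw hk).mp hwv
        rcases hb' : π' b with _ | w'
        · exfalso
          have := (hnone b).mpr ((hnone' b).mp hb')
          rw [hbw] at this
          exact Option.some_ne_none _ this
        · exact ⟨w', rfl, (hpin' b k w' v' hb' hk').mpr hP⟩
      · rintro ⟨w', hbw', hwv'⟩
        have hP : P b k := (hpin' b k w' v' hbw' hk').mp hwv'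
        rcases hb : π b with _ | w
        · exfalso
          have := (hnone' b).mpr ((hnone b).mp hb)
          rw [hbw'] at this
          exact Option.some_ne_none _ this
        · exact ⟨w, rfl, (hpin b k w v hb hk).mpr hP⟩

end Rank

/-! ## Pinned orders -/

def Pmid {n : ℕ} (a b : Fin n) : Prop := (b : ℕ) < (a : ℕ)

def Pleft {n : ℕ} (j a b : Fin n) : Prop :=
  ((a:ℕ) < (j:ℕ) ∧ (b:ℕ) < (j:ℕ) ∧ (a:ℕ) < (b:ℕ)) ∨
  ((a:ℕ) < (j:ℕ) ∧ (j:ℕ) < (b:ℕ)) ∨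
  ((j:ℕ) < (a:ℕ) ∧ (j:ℕ) < (b:ℕ) ∧ (b:ℕ) < (a:ℕ))

def Pright {n : ℕ} (i a b : Fin n) : Prop :=
  ((a:ℕ) < (i:ℕ) ∧ (b:ℕ) < (i:ℕ) ∧ (b:ℕ) < (a:ℕ)) ∨
  ((a:ℕ) < (i:ℕ) ∧ (i:ℕ) < (b:ℕ)) ∨
  ((i:ℕ) < (a:ℕ) ∧ (i:ℕ) < (b:ℕ) ∧ (a:ℕ) < (b:ℕ))

section Pin
variable {n m : ℕ} {i j : Fin n} {π : Fin n → Option (Fin m)}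

/-- helper: position of a value is not a hole -/
lemma some_not_hole (hnone : ∀ k, π k = none ↔ k = i ∨ k = j)
    {a : Fin n} {va : Fin m} (hva : π a = some va) : a ≠ i ∧ a ≠ j := by
  constructor <;> intro h <;> subst h <;>
    · have := (hnone a).mpr (by tauto)
      rw [hva] at this
      exact Option.some_ne_none _ this

lemma pin_of_avoid_mid (hm : m + 2 = n) (hij : i < j)
    (hnone : ∀ k, π k = none ↔ k = i ∨ k = j)
    (hsome : ∀ v : Fin m, ∃! k : Fin n, π k = some v)
    (hav : PPAvoids π (![1,3,0,2] : Fin 4 → Fin 4))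
    (hj : (j:ℕ) = (i:ℕ) + 1) :
    ∀ a b va vb, π a = some va → π b = some vb → (va < vb ↔ Pmid a b) := by
  have dec : ∀ a b va vb, π a = some va → π b = some vb → a < b → vb < va := by
    intro a b va vb hva hvb hab
    obtain ⟨hai, haj⟩ := some_not_hole hnone hva
    obtain ⟨hbi, hbj⟩ := some_not_hole hnone hvb
    have hai' : (a:ℕ) ≠ (i:ℕ) := fun h => hai (Fin.ext h)
    have haj' : (a:ℕ) ≠ (j:ℕ) := fun h => haj (Fin.ext h)
    have hbi' : (b:ℕ) ≠ (i:ℕ) := fun h => hbi (Fin.ext h)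
    have hbj' : (b:ℕ) ≠ (j:ℕ) := fun h => hbj (Fin.ext h)
    have hab' := Fin.lt_def.mp hab
    have hij' := Fin.lt_def.mp hij
    rcases Nat.lt_or_ge (b:ℕ) (i:ℕ) with hb|hb
    · exact F4 hm hij hnone hsome hav hab (Fin.lt_def.mpr hb) hvb hva
    · rcases Nat.lt_or_ge (a:ℕ) (i:ℕ) with ha|ha
      · exact F3 hm hij hnone hsome hav (Fin.lt_def.mpr ha) (Fin.lt_def.mpr (by omega)) hvb hva
      · exact F5 hm hij hnone hsome hav (Fin.lt_def.mpr (by omega)) hab hvb hva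
  intro a b va vb hva hvb
  rcases lt_trichotomy a b with h|h|h
  · exact iff_of_false (asymm (dec a b va vb hva hvb h)) (by have := Fin.lt_def.mp h; simp [Pmid]; omega)
  · subst h
    rw [hva] at hvb
    rw [Option.some_inj.mp hvb]
    exact iff_of_false (lt_irrefl _) (by simp [Pmid])
  · exact iff_of_true (dec b a vb va hvb hva h) (Fin.lt_def.mp h)

lemma no_avoider (hm : m + 2 = n) (hij : i < j)
    (hnone : ∀ k, π k = none ↔ k = i ∨ k = j)
    (hsome : ∀ v : Fin m, ∃! k : Fin n, π k = some v)
    (hav : PPAvoids π (![1,3,0,2] : Fin 4 → Fin 4))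
    (h0 : 0 < (i:ℕ)) (hmid : (i:ℕ) + 1 < (j:ℕ)) (hrt : (j:ℕ) < n - 1) : False := by
  have hij' := Fin.lt_def.mp hij
  have hjn := j.isLt
  set a : Fin n := ⟨0, by omega⟩ with hadef
  set e : Fin n := ⟨(i:ℕ) + 1, by omega⟩ with hedef
  set b : Fin n := ⟨(j:ℕ) + 1, by omega⟩ with hbdef
  have hane : π a ≠ none := fun hcon => by
    rcases (hnone a).mp hcon with h|h <;> (have := congrArg Fin.val h; simp [hadef] at this; try omega)
  have hene : π e ≠ none := fun hcon => by
    rcases (hnone e).mp hcon with h|h <;> (have := congrArg Fin.val h; simp [hedef] at this; try omega)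
  have hbne : π b ≠ none := fun hcon => by
    rcases (hnone b).mp hcon with h|h <;> (have := congrArg Fin.val h; simp [hbdef] at this; try omega)
  rcases hva : π a with _ | va
  · exact hane hva
  rcases hve : π e with _ | ve
  · exact hene hve
  rcases hvb : π b with _ | vb
  · exact hbne hvb
  have h1 : va < ve := F1 hm hij hnone hsome hav (Fin.lt_def.mpr (by simp [hadef]; omega))
    (Fin.lt_def.mpr (by simp [hedef])) (Fin.lt_def.mpr (by simp [hedef]; omega)) hva hve
  have h2 : ve < vb := F2 hm hij hnone hsome hav (Fin.lt_def.mpr (by simp [hedef]))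
    (Fin.lt_def.mpr (by simp [hedef]; omega)) (Fin.lt_def.mpr (by simp [hbdef])) hve hvb
  have h3 : vb < va := F3 hm hij hnone hsome hav (Fin.lt_def.mpr (by simp [hadef]; omega))
    (Fin.lt_def.mpr (by simp [hbdef])) hvb hva
  exact absurd (h1.trans h2) (asymm h3)

end Pin

section Pin2
variable {n m : ℕ} {i j : Fin n} {π : Fin n → Option (Fin m)}

lemma pin_of_avoid_left (hm : m + 2 = n) (hij : i < j)
    (hnone : ∀ k, π k = none ↔ k = i ∨ k = j)
    (hsome : ∀ v : Fin m, ∃! k : Fin n, π k = some v)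
    (hav : PPAvoids π (![1,3,0,2] : Fin 4 → Fin 4))
    (hi : (i:ℕ) = 0) :
    ∀ a b va vb, π a = some va → π b = some vb → (va < vb ↔ Pleft j a b) := by
  have key : ∀ a b va vb, π a = some va → π b = some vb → a < b →
      (((j:ℕ) < (a:ℕ) → vb < va) ∧ ((a:ℕ) < (j:ℕ) → va < vb)) := by
    intro a b va vb hva hvb hab
    obtain ⟨hai, haj⟩ := some_not_hole hnone hva
    obtain ⟨hbi, hbj⟩ := some_not_hole hnone hvb
    have hai' : (a:ℕ) ≠ (i:ℕ) := fun h => hai (Fin.ext h)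
    have haj' : (a:ℕ) ≠ (j:ℕ) := fun h => haj (Fin.ext h)
    have hbi' : (b:ℕ) ≠ (i:ℕ) := fun h => hbi (Fin.ext h)
    have hbj' : (b:ℕ) ≠ (j:ℕ) := fun h => hbj (Fin.ext h)
    have hab' := Fin.lt_def.mp hab
    constructor
    · intro hja
      exact F5 hm hij hnone hsome hav (Fin.lt_def.mpr hja) hab hvb hva
    · intro haj2
      rcases Nat.lt_or_ge (b:ℕ) (j:ℕ) with hb|hb
      · exact F6 hm hij hnone hsome hav (Fin.lt_def.mpr (by omega)) hab (Fin.lt_def.mpr hb) hva hvb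
      · exact F2 hm hij hnone hsome hav (Fin.lt_def.mpr (by omega)) (Fin.lt_def.mpr haj2)
          (Fin.lt_def.mpr (by omega)) hva hvb
  intro a b va vb hva hvb
  obtain ⟨hai, haj⟩ := some_not_hole hnone hva
  obtain ⟨hbi, hbj⟩ := some_not_hole hnone hvb
  have haj' : (a:ℕ) ≠ (j:ℕ) := fun h => haj (Fin.ext h)
  have hbj' : (b:ℕ) ≠ (j:ℕ) := fun h => hbj (Fin.ext h)
  rcases lt_trichotomy a b with h|h|h
  · have hab' := Fin.lt_def.mp h
    obtain ⟨k1, k2⟩ := key a b va vb hva hvb h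
    rcases Nat.lt_or_ge (j:ℕ) (a:ℕ) with hja|hja
    · exact iff_of_false (asymm (k1 hja)) (by simp only [Pleft]; omega)
    · exact iff_of_true (k2 (by omega)) (by simp only [Pleft]; omega)
  · subst h
    rw [hva] at hvb
    rw [Option.some_inj.mp hvb]
    exact iff_of_false (lt_irrefl _) (by simp only [Pleft]; omega)
  · have hab' := Fin.lt_def.mp h
    obtain ⟨k1, k2⟩ := key b a vb va hvb hva h
    rcases Nat.lt_or_ge (j:ℕ) (b:ℕ) with hjb|hjb
    · exact iff_of_true (k1 hjb) (by simp only [Pleft]; omega)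
    · exact iff_of_false (asymm (k2 (by omega))) (by simp only [Pleft]; omega)

lemma pin_of_avoid_right (hm : m + 2 = n) (hij : i < j)
    (hnone : ∀ k, π k = none ↔ k = i ∨ k = j)
    (hsome : ∀ v : Fin m, ∃! k : Fin n, π k = some v)
    (hav : PPAvoids π (![1,3,0,2] : Fin 4 → Fin 4))
    (hj : (j:ℕ) = n - 1) :
    ∀ a b va vb, π a = some va → π b = some vb → (va < vb ↔ Pright i a b) := by
  have key : ∀ a b va vb, π a = some va → π b = some vb → a < b →
      (((b:ℕ) < (i:ℕ) → vb < va) ∧ ((i:ℕ) < (b:ℕ) → va < vb)) := by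
    intro a b va vb hva hvb hab
    obtain ⟨hai, haj⟩ := some_not_hole hnone hva
    obtain ⟨hbi, hbj⟩ := some_not_hole hnone hvb
    have hai' : (a:ℕ) ≠ (i:ℕ) := fun h => hai (Fin.ext h)
    have haj' : (a:ℕ) ≠ (j:ℕ) := fun h => haj (Fin.ext h)
    have hbi' : (b:ℕ) ≠ (i:ℕ) := fun h => hbi (Fin.ext h)
    have hbj' : (b:ℕ) ≠ (j:ℕ) := fun h => hbj (Fin.ext h)
    have hab' := Fin.lt_def.mp hab
    have hbn := b.isLt
    constructor
    · intro hbi2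
      exact F4 hm hij hnone hsome hav hab (Fin.lt_def.mpr hbi2) hvb hva
    · intro hib
      rcases Nat.lt_or_ge (a:ℕ) (i:ℕ) with ha|ha
      · exact F1 hm hij hnone hsome hav (Fin.lt_def.mpr ha) (Fin.lt_def.mpr hib)
          (Fin.lt_def.mpr (by omega)) hva hvb
      · exact F6 hm hij hnone hsome hav (Fin.lt_def.mpr (by omega)) hab
          (Fin.lt_def.mpr (by omega)) hva hvb
  intro a b va vb hva hvb
  obtain ⟨hai, haj⟩ := some_not_hole hnone hva
  obtain ⟨hbi, hbj⟩ := some_not_hole hnone hvb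
  have hai' : (a:ℕ) ≠ (i:ℕ) := fun h => hai (Fin.ext h)
  have hbi' : (b:ℕ) ≠ (i:ℕ) := fun h => hbi (Fin.ext h)
  rcases lt_trichotomy a b with h|h|h
  · have hab' := Fin.lt_def.mp h
    obtain ⟨k1, k2⟩ := key a b va vb hva hvb h
    rcases Nat.lt_or_ge (b:ℕ) (i:ℕ) with hbi2|hbi2
    · exact iff_of_false (asymm (k1 hbi2)) (by simp only [Pright]; omega)
    · exact iff_of_true (k2 (by omega)) (by simp only [Pright]; omega)
  · subst h
    rw [hva] at hvb
    rw [Option.some_inj.mp hvb]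
    exact iff_of_false (lt_irrefl _) (by simp only [Pright]; omega)
  · have hab' := Fin.lt_def.mp h
    obtain ⟨k1, k2⟩ := key b a vb va hvb hva h
    rcases Nat.lt_or_ge (a:ℕ) (i:ℕ) with ha|ha
    · exact iff_of_true (k1 ha) (by simp only [Pright]; omega)
    · exact iff_of_false (asymm (k2 (by omega))) (by simp only [Pright]; omega)

end Pin2

/-! ## Canonical avoiders -/

section Canon
variable {n m : ℕ}

lemma exists_canon_mid (i j : Fin n) (hm : m + 2 = n) (hn : 3 ≤ n) (hij : i < j)
    (hj : (j:ℕ) = (i:ℕ) + 1) :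
    ∃ π₀ : Fin n → Option (Fin m),
      (∀ k, π₀ k = none ↔ k = i ∨ k = j) ∧
      (∀ v : Fin m, ∃! k : Fin n, π₀ k = some v) ∧
      (∀ a b va vb, π₀ a = some va → π₀ b = some vb → (va < vb ↔ Pmid a b)) ∧
      PPAvoids π₀ (![1,3,0,2] : Fin 4 → Fin 4) := by
  have hij' := Fin.lt_def.mp hij
  have hjn := j.isLt
  set π₀ : Fin n → Option (Fin m) := fun k =>
    if h : k = i ∨ k = j then none
    else some ⟨m - 1 - (if (k:ℕ) < (i:ℕ) then (k:ℕ) else (k:ℕ) - 2), by omega⟩ with hπ₀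
  have hnone : ∀ k, π₀ k = none ↔ k = i ∨ k = j := by
    intro k; by_cases h : k = i ∨ k = j <;> simp [hπ₀, h]
  -- val formula for non-holes
  have hval : ∀ k (v : Fin m), π₀ k = some v →
      ¬(k = i ∨ k = j) ∧ (v:ℕ) = m - 1 - (if (k:ℕ) < (i:ℕ) then (k:ℕ) else (k:ℕ) - 2) := by
    intro k v hk
    by_cases h : k = i ∨ k = j
    · simp [hπ₀, h] at hk
    · refine ⟨h, ?_⟩
      simp only [hπ₀, dif_neg h] at hk
      have h2 : m - 1 - (if (k:ℕ) < (i:ℕ) then (k:ℕ) else (k:ℕ) - 2) = (v:ℕ) :=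
        congrArg Fin.val (Option.some_inj.mp hk)
      exact h2.symm
  have hnh : ∀ k : Fin n, ¬(k = i ∨ k = j) → ((k:ℕ) ≠ (i:ℕ) ∧ (k:ℕ) ≠ (j:ℕ)) := by
    intro k h
    push_neg at h
    exact ⟨fun hh => h.1 (Fin.ext hh), fun hh => h.2 (Fin.ext hh)⟩
  have hsome : ∀ v : Fin m, ∃! k : Fin n, π₀ k = some v := by
    intro v
    have hv := v.isLt
    set r : ℕ := m - 1 - (v:ℕ) with hr
    set k₀ : Fin n := if hri : r < (i:ℕ) then ⟨r, by omega⟩ else ⟨r + 2, by omega⟩ with hk₀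
    have hk₀nh : ¬(k₀ = i ∨ k₀ = j) := by
      intro h
      rcases h with h|h <;> have := congrArg Fin.val h <;> simp [hk₀] at this <;>
        split_ifs at this <;> simp at this <;> omega
    have hk₀v : (k₀:ℕ) = if r < (i:ℕ) then r else r + 2 := by
      simp only [hk₀]; split_ifs <;> simp
    refine ⟨k₀, ?_, ?_⟩
    · simp only [hπ₀, dif_neg hk₀nh]
      congr 1
      apply Fin.ext
      simp only []
      rw [hk₀v] at *
      split_ifs <;> omega
    · intro k' hk'
      obtain ⟨hnh', hveq⟩ := hval k' v hk'
      obtain ⟨h1, h2⟩ := hnh k' hnh'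
      apply Fin.ext
      rw [hk₀v]
      have := k'.isLt
      split_ifs at hveq ⊢ <;> omega
  have hpin : ∀ a b va vb, π₀ a = some va → π₀ b = some vb → (va < vb ↔ Pmid a b) := by
    intro a b va vb hva hvb
    obtain ⟨ha, hva'⟩ := hval a va hva
    obtain ⟨hb, hvb'⟩ := hval b vb hvb
    obtain ⟨ha1, ha2⟩ := hnh a ha
    obtain ⟨hb1, hb2⟩ := hnh b hb
    have hbn := b.isLt
    have han := a.isLt
    rw [Fin.lt_def]
    simp only [Pmid]
    constructor <;> intro h <;> split_ifs at hva' hvb' <;> omega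
  refine ⟨π₀, hnone, hsome, hpin, ?_⟩
  intro σ hext hc
  obtain ⟨q0, q1, q2, q3, h01, h12, h23, hv1, hv2, hv3⟩ := contains2413_elim hc
  have keyN : ∀ a b : Fin n, σ a < σ b →
      ((a:ℕ)=(i:ℕ) ∨ (a:ℕ)=(j:ℕ) ∨ (b:ℕ)=(i:ℕ) ∨ (b:ℕ)=(j:ℕ) ∨ (b:ℕ)<(a:ℕ)) := by
    intro a b hab
    by_cases ha : a = i ∨ a = j
    · rcases ha with h|h
      · exact Or.inl (congrArg Fin.val h)
      · exact Or.inr (Or.inl (congrArg Fin.val h))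
    by_cases hb : b = i ∨ b = j
    · rcases hb with h|h
      · exact Or.inr (Or.inr (Or.inl (congrArg Fin.val h)))
      · exact Or.inr (Or.inr (Or.inr (Or.inl (congrArg Fin.val h))))
    rcases ha' : π₀ a with _ | va
    · exact absurd ((hnone a).mp ha') ha
    rcases hb' : π₀ b with _ | vb
    · exact absurd ((hnone b).mp hb') hb
    have := (hpin a b va vb ha' hb').mp ((hext a b va vb ha' hb').mp hab)
    exact Or.inr (Or.inr (Or.inr (Or.inr this)))
  have f01 := keyN q0 q1 (hv2.trans hv3)
  have f03 := keyN q0 q3 hv2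
  have f23 := keyN q2 q3 (hv1.trans hv2)
  have p01 := Fin.lt_def.mp h01
  have p12 := Fin.lt_def.mp h12
  have p23 := Fin.lt_def.mp h23
  omega

end Canon

section Canon2
variable {n m : ℕ}

lemma exists_canon_left (i j : Fin n) (hm : m + 2 = n) (hn : 3 ≤ n) (hij : i < j)
    (hi : (i:ℕ) = 0) :
    ∃ π₀ : Fin n → Option (Fin m),
      (∀ k, π₀ k = none ↔ k = i ∨ k = j) ∧
      (∀ v : Fin m, ∃! k : Fin n, π₀ k = some v) ∧
      (∀ a b va vb, π₀ a = some va → π₀ b = some vb → (va < vb ↔ Pleft j a b)) ∧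
      PPAvoids π₀ (![1,3,0,2] : Fin 4 → Fin 4) := by
  have hij' := Fin.lt_def.mp hij
  have hjn := j.isLt
  set π₀ : Fin n → Option (Fin m) := fun k =>
    if h : k = i ∨ k = j then none
    else some ⟨if (k:ℕ) < (j:ℕ) then (k:ℕ) - 1 else m + (j:ℕ) - (k:ℕ), by
      have h1 : (k:ℕ) ≠ (i:ℕ) := fun hh => h (Or.inl (Fin.ext hh))
      have h2 : (k:ℕ) ≠ (j:ℕ) := fun hh => h (Or.inr (Fin.ext hh))
      have := k.isLt
      split_ifs <;> omega⟩ with hπ₀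
  have hnone : ∀ k, π₀ k = none ↔ k = i ∨ k = j := by
    intro k; by_cases h : k = i ∨ k = j <;> simp [hπ₀, h]
  have hval : ∀ k (v : Fin m), π₀ k = some v →
      ¬(k = i ∨ k = j) ∧ (v:ℕ) = (if (k:ℕ) < (j:ℕ) then (k:ℕ) - 1 else m + (j:ℕ) - (k:ℕ)) := by
    intro k v hk
    by_cases h : k = i ∨ k = j
    · simp [hπ₀, h] at hk
    · refine ⟨h, ?_⟩
      simp only [hπ₀, dif_neg h] at hk
      have h2 : (if (k:ℕ) < (j:ℕ) then (k:ℕ) - 1 else m + (j:ℕ) - (k:ℕ)) = (v:ℕ) :=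
        congrArg Fin.val (Option.some_inj.mp hk)
      exact h2.symm
  have hnh : ∀ k : Fin n, ¬(k = i ∨ k = j) → ((k:ℕ) ≠ (i:ℕ) ∧ (k:ℕ) ≠ (j:ℕ)) := by
    intro k h
    push_neg at h
    exact ⟨fun hh => h.1 (Fin.ext hh), fun hh => h.2 (Fin.ext hh)⟩
  have hsome : ∀ v : Fin m, ∃! k : Fin n, π₀ k = some v := by
    intro v
    have hv := v.isLt
    set k₀ : Fin n := if hri : (v:ℕ) + 1 < (j:ℕ) then ⟨(v:ℕ) + 1, by omega⟩
      else ⟨m + (j:ℕ) - (v:ℕ), by omega⟩ with hk₀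
    have hk₀v : (k₀:ℕ) = if (v:ℕ) + 1 < (j:ℕ) then (v:ℕ) + 1 else m + (j:ℕ) - (v:ℕ) := by
      simp only [hk₀]; split_ifs <;> simp
    have hk₀nh : ¬(k₀ = i ∨ k₀ = j) := by
      intro h
      rcases h with h|h <;> (have := congrArg Fin.val h; rw [hk₀v] at this; split_ifs at this <;> omega)
    refine ⟨k₀, ?_, ?_⟩
    · simp only [hπ₀, dif_neg hk₀nh]
      congr 1
      apply Fin.ext
      show (if (k₀:ℕ) < (j:ℕ) then (k₀:ℕ) - 1 else m + (j:ℕ) - (k₀:ℕ)) = (v:ℕ)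
      rw [hk₀v]
      split_ifs <;> omega
    · intro k' hk'
      obtain ⟨hnh', hveq⟩ := hval k' v hk'
      obtain ⟨h1, h2⟩ := hnh k' hnh'
      apply Fin.ext
      rw [hk₀v]
      have := k'.isLt
      split_ifs at hveq ⊢ <;> omega
  have hpin : ∀ a b va vb, π₀ a = some va → π₀ b = some vb → (va < vb ↔ Pleft j a b) := by
    intro a b va vb hva hvb
    obtain ⟨ha, hva'⟩ := hval a va hva
    obtain ⟨hb, hvb'⟩ := hval b vb hvb
    obtain ⟨ha1, ha2⟩ := hnh a ha
    obtain ⟨hb1, hb2⟩ := hnh b hb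
    have hbn := b.isLt
    have han := a.isLt
    have hvan := va.isLt
    have hvbn := vb.isLt
    rw [Fin.lt_def]
    simp only [Pleft]
    constructor <;> intro h <;> split_ifs at hva' hvb' <;> omega
  refine ⟨π₀, hnone, hsome, hpin, ?_⟩
  intro σ hext hc
  obtain ⟨q0, q1, q2, q3, h01, h12, h23, hv1, hv2, hv3⟩ := contains2413_elim hc
  have keyN : ∀ a b : Fin n, σ a < σ b →
      ((a:ℕ)=(i:ℕ) ∨ (a:ℕ)=(j:ℕ) ∨ (b:ℕ)=(i:ℕ) ∨ (b:ℕ)=(j:ℕ) ∨ Pleft j a b) := by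
    intro a b hab
    by_cases ha : a = i ∨ a = j
    · rcases ha with h|h
      · exact Or.inl (congrArg Fin.val h)
      · exact Or.inr (Or.inl (congrArg Fin.val h))
    by_cases hb : b = i ∨ b = j
    · rcases hb with h|h
      · exact Or.inr (Or.inr (Or.inl (congrArg Fin.val h)))
      · exact Or.inr (Or.inr (Or.inr (Or.inl (congrArg Fin.val h))))
    rcases ha' : π₀ a with _ | va
    · exact absurd ((hnone a).mp ha') ha
    rcases hb' : π₀ b with _ | vb
    · exact absurd ((hnone b).mp hb') hb
    have := (hpin a b va vb ha' hb').mp ((hext a b va vb ha' hb').mp hab)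
    exact Or.inr (Or.inr (Or.inr (Or.inr this)))
  have f20 := keyN q2 q0 hv1
  have f01 := keyN q0 q1 (hv2.trans hv3)
  have f03 := keyN q0 q3 hv2
  have f21 := keyN q2 q1 (hv1.trans (hv2.trans hv3))
  have f23 := keyN q2 q3 (hv1.trans hv2)
  have f31 := keyN q3 q1 hv3
  have p01 := Fin.lt_def.mp h01
  have p12 := Fin.lt_def.mp h12
  have p23 := Fin.lt_def.mp h23
  simp only [Pleft] at f20 f01 f03 f21 f23 f31
  omega

end Canon2

section Canon3
variable {n m : ℕ}

lemma exists_canon_right (i j : Fin n) (hm : m + 2 = n) (hn : 3 ≤ n) (hij : i < j)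
    (hjtop : (j:ℕ) = n - 1) :
    ∃ π₀ : Fin n → Option (Fin m),
      (∀ k, π₀ k = none ↔ k = i ∨ k = j) ∧
      (∀ v : Fin m, ∃! k : Fin n, π₀ k = some v) ∧
      (∀ a b va vb, π₀ a = some va → π₀ b = some vb → (va < vb ↔ Pright i a b)) ∧
      PPAvoids π₀ (![1,3,0,2] : Fin 4 → Fin 4) := by
  have hij' := Fin.lt_def.mp hij
  have hjn := j.isLt
  set π₀ : Fin n → Option (Fin m) := fun k =>
    if h : k = i ∨ k = j then none
    else some ⟨if (k:ℕ) < (i:ℕ) then (i:ℕ) - 1 - (k:ℕ) else (k:ℕ) - 1, by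
      have h1 : (k:ℕ) ≠ (i:ℕ) := fun hh => h (Or.inl (Fin.ext hh))
      have h2 : (k:ℕ) ≠ (j:ℕ) := fun hh => h (Or.inr (Fin.ext hh))
      have := k.isLt
      split_ifs <;> omega⟩ with hπ₀
  have hnone : ∀ k, π₀ k = none ↔ k = i ∨ k = j := by
    intro k; by_cases h : k = i ∨ k = j <;> simp [hπ₀, h]
  have hval : ∀ k (v : Fin m), π₀ k = some v →
      ¬(k = i ∨ k = j) ∧ (v:ℕ) = (if (k:ℕ) < (i:ℕ) then (i:ℕ) - 1 - (k:ℕ) else (k:ℕ) - 1) := by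
    intro k v hk
    by_cases h : k = i ∨ k = j
    · simp [hπ₀, h] at hk
    · refine ⟨h, ?_⟩
      simp only [hπ₀, dif_neg h] at hk
      have h2 : (if (k:ℕ) < (i:ℕ) then (i:ℕ) - 1 - (k:ℕ) else (k:ℕ) - 1) = (v:ℕ) :=
        congrArg Fin.val (Option.some_inj.mp hk)
      exact h2.symm
  have hnh : ∀ k : Fin n, ¬(k = i ∨ k = j) → ((k:ℕ) ≠ (i:ℕ) ∧ (k:ℕ) ≠ (j:ℕ)) := by
    intro k h
    push_neg at h
    exact ⟨fun hh => h.1 (Fin.ext hh), fun hh => h.2 (Fin.ext hh)⟩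
  have hsome : ∀ v : Fin m, ∃! k : Fin n, π₀ k = some v := by
    intro v
    have hv := v.isLt
    set k₀ : Fin n := if hri : (v:ℕ) < (i:ℕ) then ⟨(i:ℕ) - 1 - (v:ℕ), by omega⟩
      else ⟨(v:ℕ) + 1, by omega⟩ with hk₀
    have hk₀v : (k₀:ℕ) = if (v:ℕ) < (i:ℕ) then (i:ℕ) - 1 - (v:ℕ) else (v:ℕ) + 1 := by
      simp only [hk₀]; split_ifs <;> simp
    have hk₀nh : ¬(k₀ = i ∨ k₀ = j) := by
      intro h
      rcases h with h|h <;> (have := congrArg Fin.val h; rw [hk₀v] at this; split_ifs at this <;> omega)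
    refine ⟨k₀, ?_, ?_⟩
    · simp only [hπ₀, dif_neg hk₀nh]
      congr 1
      apply Fin.ext
      show (if (k₀:ℕ) < (i:ℕ) then (i:ℕ) - 1 - (k₀:ℕ) else (k₀:ℕ) - 1) = (v:ℕ)
      rw [hk₀v]
      split_ifs <;> omega
    · intro k' hk'
      obtain ⟨hnh', hveq⟩ := hval k' v hk'
      obtain ⟨h1, h2⟩ := hnh k' hnh'
      apply Fin.ext
      rw [hk₀v]
      have := k'.isLt
      split_ifs at hveq ⊢ <;> omega
  have hpin : ∀ a b va vb, π₀ a = some va → π₀ b = some vb → (va < vb ↔ Pright i a b) := by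
    intro a b va vb hva hvb
    obtain ⟨ha, hva'⟩ := hval a va hva
    obtain ⟨hb, hvb'⟩ := hval b vb hvb
    obtain ⟨ha1, ha2⟩ := hnh a ha
    obtain ⟨hb1, hb2⟩ := hnh b hb
    have hbn := b.isLt
    have han := a.isLt
    have hvan := va.isLt
    have hvbn := vb.isLt
    rw [Fin.lt_def]
    simp only [Pright]
    constructor <;> intro h <;> split_ifs at hva' hvb' <;> omega
  refine ⟨π₀, hnone, hsome, hpin, ?_⟩
  intro σ hext hc
  obtain ⟨q0, q1, q2, q3, h01, h12, h23, hv1, hv2, hv3⟩ := contains2413_elim hc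
  have keyN : ∀ a b : Fin n, σ a < σ b →
      ((a:ℕ)=(i:ℕ) ∨ (a:ℕ)=(j:ℕ) ∨ (b:ℕ)=(i:ℕ) ∨ (b:ℕ)=(j:ℕ) ∨ Pright i a b) := by
    intro a b hab
    by_cases ha : a = i ∨ a = j
    · rcases ha with h|h
      · exact Or.inl (congrArg Fin.val h)
      · exact Or.inr (Or.inl (congrArg Fin.val h))
    by_cases hb : b = i ∨ b = j
    · rcases hb with h|h
      · exact Or.inr (Or.inr (Or.inl (congrArg Fin.val h)))
      · exact Or.inr (Or.inr (Or.inr (Or.inl (congrArg Fin.val h))))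
    rcases ha' : π₀ a with _ | va
    · exact absurd ((hnone a).mp ha') ha
    rcases hb' : π₀ b with _ | vb
    · exact absurd ((hnone b).mp hb') hb
    have := (hpin a b va vb ha' hb').mp ((hext a b va vb ha' hb').mp hab)
    exact Or.inr (Or.inr (Or.inr (Or.inr this)))
  have f20 := keyN q2 q0 hv1
  have f01 := keyN q0 q1 (hv2.trans hv3)
  have f03 := keyN q0 q3 hv2
  have f21 := keyN q2 q1 (hv1.trans (hv2.trans hv3))
  have f23 := keyN q2 q3 (hv1.trans hv2)
  have f31 := keyN q3 q1 hv3
  have p01 := Fin.lt_def.mp h01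
  have p12 := Fin.lt_def.mp h12
  have p23 := Fin.lt_def.mp h23
  simp only [Pright] at f20 f01 f03 f21 f23 f31
  omega

end Canon3

/-! ## The `snH` computation -/

lemma snH_eq {n : ℕ} (hn : 3 ≤ n) (i j : Fin n) (hij : i < j) :
    snH ({i, j} : Finset (Fin n)) (![1, 3, 0, 2] : Fin 4 → Fin 4) =
      if (i : ℕ) = 0 ∨ (j : ℕ) = (i : ℕ) + 1 ∨ (j : ℕ) = n - 1 then 1 else 0 := by
  classical
  have hcard : ({i, j} : Finset (Fin n)).card = 2 := Finset.card_pair (ne_of_lt hij)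
  have hm : (n - ({i, j} : Finset (Fin n)).card) + 2 = n := by rw [hcard]; omega
  have hmem : ∀ k : Fin n, (k ∈ ({i, j} : Finset (Fin n))) ↔ (k = i ∨ k = j) := by
    intro k; simp
  unfold snH
  split_ifs with hcond
  · rw [Nat.card_eq_one_iff_unique]
    constructor
    · constructor
      rintro ⟨π, ⟨h1, h2⟩, hav⟩ ⟨π', ⟨h1', h2'⟩, hav'⟩
      have h1n : ∀ k, π k = none ↔ k = i ∨ k = j := fun k => (h1 k).trans (hmem k)
      have h1n' : ∀ k, π' k = none ↔ k = i ∨ k = j := fun k => (h1' k).trans (hmem k)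
      apply Subtype.ext
      show π = π'
      rcases hcond with hc|hc|hc
      · exact uniq_of_pin (Pleft j) h1n h2 h1n' h2'
          (pin_of_avoid_left hm hij h1n h2 hav hc)
          (pin_of_avoid_left hm hij h1n' h2' hav' hc)
      · exact uniq_of_pin Pmid h1n h2 h1n' h2'
          (pin_of_avoid_mid hm hij h1n h2 hav hc)
          (pin_of_avoid_mid hm hij h1n' h2' hav' hc)
      · exact uniq_of_pin (Pright i) h1n h2 h1n' h2'
          (pin_of_avoid_right hm hij h1n h2 hav hc)
          (pin_of_avoid_right hm hij h1n' h2' hav' hc)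
    · rcases hcond with hc|hc|hc
      · obtain ⟨π₀, c1, c2, _, c4⟩ := exists_canon_left i j hm hn hij hc
        exact ⟨⟨π₀, ⟨fun k => (c1 k).trans (hmem k).symm, c2⟩, c4⟩⟩
      · obtain ⟨π₀, c1, c2, _, c4⟩ := exists_canon_mid i j hm hn hij hc
        exact ⟨⟨π₀, ⟨fun k => (c1 k).trans (hmem k).symm, c2⟩, c4⟩⟩
      · obtain ⟨π₀, c1, c2, _, c4⟩ := exists_canon_right i j hm hn hij hc
        exact ⟨⟨π₀, ⟨fun k => (c1 k).trans (hmem k).symm, c2⟩, c4⟩⟩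
  · push_neg at hcond
    obtain ⟨hc1, hc2, hc3⟩ := hcond
    have hij' := Fin.lt_def.mp hij
    have hjn := j.isLt
    have : IsEmpty {π : Fin n → Option (Fin (n - ({i, j} : Finset (Fin n)).card)) //
        IsPPermH ({i, j} : Finset (Fin n)) π ∧ PPAvoids π (![1, 3, 0, 2] : Fin 4 → Fin 4)} := by
      constructor
      rintro ⟨π, ⟨h1, h2⟩, hav⟩
      have h1n : ∀ k, π k = none ↔ k = i ∨ k = j := fun k => (h1 k).trans (hmem k)
      exact no_avoider hm hij h1n h2 hav (by omega) (by omega) (by omega)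
    exact Nat.card_of_isEmpty

/-! ## Counting the good hole pairs -/

def enc (n a b : ℕ) : ℕ :=
  if a = 0 then b - 1 else if b = a + 1 then n - 2 + a else 2 * n - 4 + a

lemma enc_inj (n : ℕ) (hn : 3 ≤ n) (a b a' b' : ℕ)
    (h1 : a < b) (h2 : b < n) (h3 : a = 0 ∨ b = a + 1 ∨ b = n - 1)
    (h1' : a' < b') (h2' : b' < n) (h3' : a' = 0 ∨ b' = a' + 1 ∨ b' = n - 1)
    (h : enc n a b = enc n a' b') : a = a' ∧ b = b' := by
  unfold enc at h
  split_ifs at h <;> omega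

lemma enc_surj (n : ℕ) (hn : 3 ≤ n) (c : ℕ) (hc : c < 3 * n - 6) :
    ∃ a b, a < b ∧ b < n ∧ (a = 0 ∨ b = a + 1 ∨ b = n - 1) ∧ enc n a b = c := by
  unfold enc
  by_cases k1 : c < n - 1
  · exact ⟨0, c + 1, by omega, by omega, by omega, by simp⟩
  · by_cases k2 : c < 2 * n - 3
    · refine ⟨c - (n - 2), c - (n - 2) + 1, by omega, by omega, by omega, ?_⟩
      split_ifs <;> omega
    · refine ⟨c - (2 * n - 4), n - 1, by omega, by omega, by omega, ?_⟩
      split_ifs <;> omega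

/-! ## The `snk` computation for 2413 -/

lemma snk_2413 {n : ℕ} (hn : 3 ≤ n) :
    snk n 2 (![1, 3, 0, 2] : Fin 4 → Fin 4) = 3 * n - 6 := by
  classical
  have hm : (n - 2) + 2 = n := by omega
  set Pt := {q : Fin n × Fin n // q.1 < q.2 ∧
    ((q.1 : ℕ) = 0 ∨ (q.2 : ℕ) = (q.1 : ℕ) + 1 ∨ (q.2 : ℕ) = n - 1)} with hPt
  -- canonical avoider for each good hole pair
  have hex : ∀ q : Pt, ∃ π : Fin n → Option (Fin (n - 2)),
      (∀ k, π k = none ↔ k = q.1.1 ∨ k = q.1.2) ∧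
      (∀ v : Fin (n - 2), ∃! k : Fin n, π k = some v) ∧
      PPAvoids π (![1, 3, 0, 2] : Fin 4 → Fin 4) := by
    rintro ⟨⟨i, j⟩, hij, hcond⟩
    rcases hcond with hc|hc|hc
    · obtain ⟨π₀, c1, c2, _, c4⟩ := exists_canon_left i j hm hn hij hc
      exact ⟨π₀, c1, c2, c4⟩
    · obtain ⟨π₀, c1, c2, _, c4⟩ := exists_canon_mid i j hm hn hij hc
      exact ⟨π₀, c1, c2, c4⟩
    · obtain ⟨π₀, c1, c2, _, c4⟩ := exists_canon_right i j hm hn hij hc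
      exact ⟨π₀, c1, c2, c4⟩
  have hfilter : ∀ (π : Fin n → Option (Fin (n - 2))) (i j : Fin n), i < j →
      (∀ k, π k = none ↔ k = i ∨ k = j) →
      (Finset.univ.filter fun k => π k = none) = {i, j} := by
    intro π i j hij hnone
    ext k
    simp [hnone k]
  have hIsP : ∀ (π : Fin n → Option (Fin (n - 2))) (i j : Fin n), i < j →
      (∀ k, π k = none ↔ k = i ∨ k = j) →
      (∀ v : Fin (n - 2), ∃! k : Fin n, π k = some v) → IsPPerm 2 π := by
    intro π i j hij hnone hsome
    exact ⟨by rw [hfilter π i j hij hnone]; exact Finset.card_pair (ne_of_lt hij), hsome⟩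
  set g : Pt → {π : Fin n → Option (Fin (n - 2)) //
      IsPPerm 2 π ∧ PPAvoids π (![1, 3, 0, 2] : Fin 4 → Fin 4)} := fun q =>
    ⟨Classical.choose (hex q),
      hIsP _ q.1.1 q.1.2 q.2.1 (Classical.choose_spec (hex q)).1 (Classical.choose_spec (hex q)).2.1,
      (Classical.choose_spec (hex q)).2.2⟩ with hg
  have hgnone : ∀ q : Pt, ∀ k, (g q).1 k = none ↔ k = q.1.1 ∨ k = q.1.2 :=
    fun q => (Classical.choose_spec (hex q)).1
  have hginj : Function.Injective g := by
    rintro q q' heq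
    have hnone := hgnone q
    have hnone' := hgnone q'
    rw [heq] at hnone
    obtain ⟨⟨i, j⟩, hij, hcond⟩ := q
    obtain ⟨⟨i', j'⟩, hij', hcond'⟩ := q'
    have e1 : i' = i ∨ i' = j := (hnone i').mp ((hnone' i').mpr (Or.inl rfl))
    have e2 : j' = i ∨ j' = j := (hnone j').mp ((hnone' j').mpr (Or.inr rfl))
    have e3 : i = i' ∨ i = j' := (hnone' i).mp ((hnone i).mpr (Or.inl rfl))
    have e1' : (i':ℕ) = (i:ℕ) ∨ (i':ℕ) = (j:ℕ) := e1.imp (congrArg Fin.val) (congrArg Fin.val)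
    have e2' : (j':ℕ) = (i:ℕ) ∨ (j':ℕ) = (j:ℕ) := e2.imp (congrArg Fin.val) (congrArg Fin.val)
    have e3' : (i:ℕ) = (i':ℕ) ∨ (i:ℕ) = (j':ℕ) := e3.imp (congrArg Fin.val) (congrArg Fin.val)
    have o1 : (i:ℕ) < (j:ℕ) := Fin.lt_def.mp hij
    have o2 : (i':ℕ) < (j':ℕ) := Fin.lt_def.mp hij'
    exact Subtype.ext (Prod.ext (Fin.ext (show (i:ℕ) = (i':ℕ) by omega)) (Fin.ext (show (j:ℕ) = (j':ℕ) by omega)))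
  have hgsurj : Function.Surjective g := by
    rintro ⟨π, ⟨hcard, hsome⟩, hav⟩
    obtain ⟨x, y, hxy, hset⟩ := Finset.card_eq_two.mp hcard
    set i := if x < y then x else y with hi
    set j := if x < y then y else x with hj
    have hij : i < j := by
      simp only [hi, hj]
      split_ifs with h
      · exact h
      · rcases lt_trichotomy x y with h'|h'|h' <;> first | omega | exact absurd h' h | exact h' | simp_all
    have hset' : ({i, j} : Finset (Fin n)) = {x, y} := by
      simp only [hi, hj]
      split_ifs with h
      · rfl
      · exact Finset.pair_comm y x
    have hnone : ∀ k, π k = none ↔ k = i ∨ k = j := by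
      intro k
      have : π k = none ↔ k ∈ (Finset.univ.filter fun k => π k = none) := by simp
      rw [this, hset, ← hset']
      simp
    have hcond : (i : ℕ) = 0 ∨ (j : ℕ) = (i : ℕ) + 1 ∨ (j : ℕ) = n - 1 := by
      by_contra hc
      push_neg at hc
      have hij' := Fin.lt_def.mp hij
      have hjn := j.isLt
      exact no_avoider hm hij hnone hsome hav (by omega) (by omega) (by omega)
    refine ⟨⟨(i, j), hij, hcond⟩, ?_⟩
    apply Subtype.ext
    show Classical.choose (hex ⟨(i, j), hij, hcond⟩) = π
    set q : Pt := ⟨(i, j), hij, hcond⟩ with hq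
    have c1 := (Classical.choose_spec (hex q)).1
    have c2 := (Classical.choose_spec (hex q)).2.1
    have c4 := (Classical.choose_spec (hex q)).2.2
    rcases hcond with hc|hc|hc
    · exact uniq_of_pin (Pleft j) c1 c2 hnone hsome
        (pin_of_avoid_left hm hij c1 c2 c4 hc)
        (pin_of_avoid_left hm hij hnone hsome hav hc)
    · exact uniq_of_pin Pmid c1 c2 hnone hsome
        (pin_of_avoid_mid hm hij c1 c2 c4 hc)
        (pin_of_avoid_mid hm hij hnone hsome hav hc)
    · exact uniq_of_pin (Pright i) c1 c2 hnone hsome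
        (pin_of_avoid_right hm hij c1 c2 c4 hc)
        (pin_of_avoid_right hm hij hnone hsome hav hc)
  have h1 : snk n 2 (![1, 3, 0, 2] : Fin 4 → Fin 4) = Nat.card Pt := by
    unfold snk
    exact (Nat.card_eq_of_bijective g ⟨hginj, hgsurj⟩).symm
  rw [h1]
  -- count the good pairs via an explicit encoding
  have hb : ∀ q : Pt, enc n (q.1.1 : ℕ) (q.1.2 : ℕ) < 3 * n - 6 := by
    intro q
    have o1 : (q.1.1 : ℕ) < (q.1.2 : ℕ) := Fin.lt_def.mp q.2.1
    have o2 := q.1.2.isLt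
    have o3 := q.2.2
    unfold enc
    split_ifs <;> omega
  set e : Pt → Fin (3 * n - 6) := fun q => ⟨enc n (q.1.1 : ℕ) (q.1.2 : ℕ), hb q⟩ with he
  have heval : ∀ q : Pt, (e q : ℕ) = enc n (q.1.1 : ℕ) (q.1.2 : ℕ) := fun _ => rfl
  have heinj : Function.Injective e := by
    intro q q' h
    have h' : enc n (q.1.1 : ℕ) (q.1.2 : ℕ) = enc n (q'.1.1 : ℕ) (q'.1.2 : ℕ) := by
      rw [← heval q, ← heval q', h]
    have o1 : (q.1.1 : ℕ) < (q.1.2 : ℕ) := Fin.lt_def.mp q.2.1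
    have o2 := q.1.2.isLt
    have o3 := q.2.2
    have o1' : (q'.1.1 : ℕ) < (q'.1.2 : ℕ) := Fin.lt_def.mp q'.2.1
    have o2' := q'.1.2.isLt
    have o3' := q'.2.2
    have := enc_inj n hn _ _ _ _ o1 o2 o3 o1' o2' o3' h'
    exact Subtype.ext (Prod.ext (Fin.ext this.1) (Fin.ext this.2))
  have hesurj : Function.Surjective e := by
    rintro ⟨c, hc⟩
    obtain ⟨a, b, hab, hbn, hcond, henc⟩ := enc_surj n hn c hc
    refine ⟨⟨(⟨a, by omega⟩, ⟨b, hbn⟩), Fin.lt_def.mpr hab, hcond⟩, Fin.ext ?_⟩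
    rw [heval]
    exact henc
  rw [Nat.card_eq_of_bijective e ⟨heinj, hesurj⟩, Nat.card_eq_fintype_card, Fintype.card_fin]

/-! ## Complementation: 3142 from 2413 -/

section Comp
variable {n : ℕ}

lemma avoids_map_rev {m : ℕ} {p q : Fin 4 → Fin 4}
    (hpq : ∀ a b : Fin 4, p a < p b ↔ q b < q a)
    {π : Fin n → Option (Fin m)} (hav : PPAvoids π p) :
    PPAvoids (fun k => (π k).map Fin.rev) q := by
  intro σ' hext' hc'
  obtain ⟨g, hg, hiff⟩ := hc'
  refine hav (σ'.trans Fin.revPerm) ?_ ⟨g, hg, fun a b => ?_⟩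
  · intro a b va vb ha hb
    have ha' : (fun k => (π k).map Fin.rev) a = some va.rev := by
      show (π a).map Fin.rev = some va.rev; rw [ha]; rfl
    have hb' : (fun k => (π k).map Fin.rev) b = some vb.rev := by
      show (π b).map Fin.rev = some vb.rev; rw [hb]; rfl
    show (σ' a).rev < (σ' b).rev ↔ va < vb
    refine Fin.rev_lt_rev.trans ((hext' b a vb.rev va.rev hb' ha').trans ?_)
    exact Fin.rev_lt_rev
  · show (σ' (g a)).rev < (σ' (g b)).rev ↔ p a < p b
    refine Fin.rev_lt_rev.trans ((hiff b a).trans ?_)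
    exact (hpq a b).symm
end Comp

lemma isPPerm_map_rev {n : ℕ} {π : Fin n → Option (Fin (n - 2))} (h : IsPPerm 2 π) :
    IsPPerm 2 (fun k => (π k).map Fin.rev) := by
  obtain ⟨h1, h2⟩ := h
  constructor
  · have hfe : (Finset.univ.filter fun i => ((π i).map Fin.rev) = none) =
        Finset.univ.filter fun i => π i = none := by
      apply Finset.filter_congr
      intro k _
      cases hπ : π k <;> simp [hπ]
    show (Finset.univ.filter fun i => ((π i).map Fin.rev) = none).card = 2
    rw [hfe]
    exact h1
  · intro v
    obtain ⟨k, hk, hu⟩ := h2 v.rev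
    refine ⟨k, ?_, ?_⟩
    · show (π k).map Fin.rev = some v
      rw [hk]
      simp
    · intro k' hk'
      have hk'' : (π k').map Fin.rev = some v := hk'
      apply hu
      show π k' = some v.rev
      rcases hπ : π k' with _ | w
      · rw [hπ] at hk''; simp at hk''
      · rw [hπ] at hk''
        have : w.rev = v := Option.some_inj.mp hk''
        rw [← this, Fin.rev_rev]

lemma snk_3142_eq_2413 {n : ℕ} :
    snk n 2 (![2, 0, 3, 1] : Fin 4 → Fin 4) = snk n 2 (![1, 3, 0, 2] : Fin 4 → Fin 4) := by
  unfold snk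
  apply Nat.card_congr
  have hinv : ∀ π : Fin n → Option (Fin (n - 2)),
      (fun k => ((fun k' => (π k').map Fin.rev) k).map Fin.rev) = π := by
    intro π
    funext k
    show ((π k).map Fin.rev).map Fin.rev = π k; cases hπ : π k <;> simp [hπ, Fin.rev_rev]
  refine ⟨fun x => ⟨fun k => (x.1 k).map Fin.rev, isPPerm_map_rev x.2.1,
      avoids_map_rev (by decide) x.2.2⟩,
    fun x => ⟨fun k => (x.1 k).map Fin.rev, isPPerm_map_rev x.2.1,
      avoids_map_rev (by decide) x.2.2⟩, ?_, ?_⟩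
  · intro x
    exact Subtype.ext (hinv x.1)
  · intro x
    exact Subtype.ext (hinv x.1)

/-- For `n ≥ 3`: `s_n^2(2413) = s_n^2(3142) = 3n - 6`; and for a hole set
`H = {i, j}` with `i < j`, `s_n^H(2413) = 1` if one of the three intervals
determined by the holes is empty, and `0` otherwise. -/
theorem count_2413_two_holes (n : ℕ) (hn : 3 ≤ n) :
    snk n 2 (![1, 3, 0, 2] : Fin 4 → Fin 4) = 3 * n - 6 ∧
    snk n 2 (![2, 0, 3, 1] : Fin 4 → Fin 4) = 3 * n - 6 ∧
    (∀ i j : Fin n, i < j →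
      snH ({i, j} : Finset (Fin n)) (![1, 3, 0, 2] : Fin 4 → Fin 4) =
        if (i : ℕ) = 0 ∨ (j : ℕ) = (i : ℕ) + 1 ∨ (j : ℕ) = n - 1 then 1 else 0) :=
  ⟨snk_2413 hn, snk_3142_eq_2413.trans (snk_2413 hn), fun i j hij => snH_eq hn i j hij⟩
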